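/- For every nonzero complex number q with |q| < 1, Σ_{m≥1} Σ_{n≥1} (−1)^{m−1} q^{2mn} (q^{m−1} + q^{−m}) / ((1+q^{2n−1})(1−q^{2m−1})) = q ( Σ_{n≥1} q^{n−1}/(1+q^{2n−1}) )^2. -/

import Mathlib

open Filter Topology

namespace Theta2Aux

noncomputable def A (q : ℂ) (n : ℕ) : ℂ := q ^ n / (1 + q ^ (2 * n + 1))

noncomputable def T (q : ℂ) (n : ℕ) : ℂ := ∑' k : ℕ, A q (k + n)

variable {q : ℂ}

lemma norm_one_add_ge (w : ℂ) : 1 - ‖w‖ ≤ ‖1 + w‖ := by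
  have h2 := norm_sub_norm_le (1 : ℂ) (-w)
  simp only [sub_neg_eq_add, norm_neg, norm_one] at h2
  linarith

lemma norm_one_sub_ge (w : ℂ) : 1 - ‖w‖ ≤ ‖1 - w‖ := by
  have h2 := norm_sub_norm_le (1 : ℂ) w
  simp only [norm_one] at h2
  linarith

lemma npow_le (hq : ‖q‖ < 1) {a b : ℕ} (h : a ≤ b) : ‖q‖ ^ b ≤ ‖q‖ ^ a :=
  pow_le_pow_of_le_one (norm_nonneg q) hq.le h

lemma npow_le_one (hq : ‖q‖ < 1) (a : ℕ) : ‖q‖ ^ a ≤ 1 := by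
  calc ‖q‖ ^ a ≤ ‖q‖ ^ 0 := npow_le hq (Nat.zero_le a)
    _ = 1 := pow_zero _

lemma norm_odd_le (hq : ‖q‖ < 1) (k : ℕ) : ‖q ^ (2 * k + 1)‖ ≤ ‖q‖ := by
  rw [norm_pow]
  calc ‖q‖ ^ (2 * k + 1) ≤ ‖q‖ ^ 1 := npow_le hq (by omega)
    _ = ‖q‖ := pow_one _

lemma denom_add_lb (hq : ‖q‖ < 1) (k : ℕ) : 1 - ‖q‖ ≤ ‖1 + q ^ (2 * k + 1)‖ := by
  have := norm_one_add_ge (q ^ (2 * k + 1))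
  have := norm_odd_le hq k
  linarith

lemma denom_sub_lb (hq : ‖q‖ < 1) (k : ℕ) : 1 - ‖q‖ ≤ ‖1 - q ^ (2 * k + 1)‖ := by
  have := norm_one_sub_ge (q ^ (2 * k + 1))
  have := norm_odd_le hq k
  linarith

lemma denom_add_ne (hq : ‖q‖ < 1) (k : ℕ) : (1 : ℂ) + q ^ (2 * k + 1) ≠ 0 := by
  intro h
  have := denom_add_lb hq k
  rw [h, norm_zero] at this
  linarith

lemma denom_sub_ne (hq : ‖q‖ < 1) (k : ℕ) : (1 : ℂ) - q ^ (2 * k + 1) ≠ 0 := by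
  intro h
  have := denom_sub_lb hq k
  rw [h, norm_zero] at this
  linarith

lemma inv_denom_add_le (hq : ‖q‖ < 1) (k : ℕ) : ‖(1 + q ^ (2 * k + 1))⁻¹‖ ≤ (1 - ‖q‖)⁻¹ := by
  rw [norm_inv]
  exact inv_anti₀ (by linarith) (denom_add_lb hq k)

lemma inv_denom_sub_le (hq : ‖q‖ < 1) (k : ℕ) : ‖(1 - q ^ (2 * k + 1))⁻¹‖ ≤ (1 - ‖q‖)⁻¹ := by
  rw [norm_inv]
  exact inv_anti₀ (by linarith) (denom_sub_lb hq k)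

lemma normA_le (hq : ‖q‖ < 1) (n : ℕ) : ‖A q n‖ ≤ ‖q‖ ^ n * (1 - ‖q‖)⁻¹ := by
  rw [A, div_eq_mul_inv, norm_mul, norm_pow]
  exact mul_le_mul_of_nonneg_left (inv_denom_add_le hq n) (by positivity)

lemma summableA (hq : ‖q‖ < 1) : Summable (A q) :=
  Summable.of_norm_bounded ((summable_geometric_of_lt_one (norm_nonneg q) hq).mul_right _)
    (normA_le hq)

lemma summableA_shift (hq : ‖q‖ < 1) (n : ℕ) : Summable (fun k => A q (k + n)) :=
  (summable_nat_add_iff n).2 (summableA hq)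

lemma T_rec (hq : ‖q‖ < 1) (n : ℕ) : T q n = A q n + T q (n + 1) := by
  rw [T, Summable.tsum_eq_zero_add (summableA_shift hq n)]
  congr 1
  · simp
  · rw [T]
    exact tsum_congr fun k => by rw [show k + 1 + n = k + (n + 1) by omega]

lemma normT_le (hq : ‖q‖ < 1) (n : ℕ) : ‖T q n‖ ≤ ‖q‖ ^ n * ((1 - ‖q‖)⁻¹ * (1 - ‖q‖)⁻¹) := by
  have hb : ∀ k : ℕ, ‖A q (k + n)‖ ≤ ‖q‖ ^ k * (‖q‖ ^ n * (1 - ‖q‖)⁻¹) := by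
    intro k
    calc ‖A q (k + n)‖ ≤ ‖q‖ ^ (k + n) * (1 - ‖q‖)⁻¹ := normA_le hq _
      _ = ‖q‖ ^ k * (‖q‖ ^ n * (1 - ‖q‖)⁻¹) := by rw [pow_add]; ring
  have hgs : Summable (fun k : ℕ => ‖q‖ ^ k * (‖q‖ ^ n * (1 - ‖q‖)⁻¹)) :=
    (summable_geometric_of_lt_one (norm_nonneg q) hq).mul_right _
  have hns : Summable (fun k => ‖A q (k + n)‖) :=
    Summable.of_nonneg_of_le (fun k => norm_nonneg _) hb hgs
  calc ‖T q n‖ ≤ ∑' k, ‖A q (k + n)‖ := norm_tsum_le_tsum_norm hns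
    _ ≤ ∑' k : ℕ, ‖q‖ ^ k * (‖q‖ ^ n * (1 - ‖q‖)⁻¹) := Summable.tsum_le_tsum hb hns hgs
    _ = (1 - ‖q‖)⁻¹ * (‖q‖ ^ n * (1 - ‖q‖)⁻¹) := by
        rw [tsum_mul_right, tsum_geometric_of_lt_one (norm_nonneg q) hq]
    _ = ‖q‖ ^ n * ((1 - ‖q‖)⁻¹ * (1 - ‖q‖)⁻¹) := by ring

lemma T_tendsto (hq : ‖q‖ < 1) : Tendsto (T q) atTop (𝓝 0) := by
  apply squeeze_zero_norm (normT_le hq)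
  have := (tendsto_pow_atTop_nhds_zero_of_lt_one (norm_nonneg q) hq).mul_const
    ((1 - ‖q‖)⁻¹ * (1 - ‖q‖)⁻¹)
  simpa using this

/-- Geometric-expansion key lemma. -/
lemma key (hq : ‖q‖ < 1) {x : ℂ} (hx : ‖x‖ < 1) :
    ∑' m : ℕ, (-1 : ℂ) ^ m * x ^ (m + 1) / (1 - q ^ (2 * m + 1))
      = ∑' k : ℕ, x * q ^ k / (1 + x * q ^ (2 * k)) := by
  set f : ℕ → ℕ → ℂ := fun m k => (-1 : ℂ) ^ m * x ^ (m + 1) * q ^ ((2 * m + 1) * k) with hf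
  have hsum : Summable (Function.uncurry f) := by
    apply Summable.of_norm_bounded (g := fun p : ℕ × ℕ => ‖x‖ ^ p.1 * ‖q‖ ^ p.2)
      (Summable.mul_of_nonneg (summable_geometric_of_lt_one (norm_nonneg x) hx)
        (summable_geometric_of_lt_one (norm_nonneg q) hq)
        (fun _ => by positivity) (fun _ => by positivity))
    rintro ⟨m, k⟩
    simp only [Function.uncurry, hf, norm_mul, norm_pow, norm_neg, norm_one, one_pow, one_mul]
    have h1 : ‖x‖ ^ (m + 1) ≤ ‖x‖ ^ m := pow_le_pow_of_le_one (norm_nonneg x) hx.le (by omega)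
    have h2 : ‖q‖ ^ ((2 * m + 1) * k) ≤ ‖q‖ ^ k := npow_le hq (by nlinarith)
    exact mul_le_mul h1 h2 (by positivity) (by positivity)
  have h1 : ∀ m : ℕ, ∑' k, f m k = (-1 : ℂ) ^ m * x ^ (m + 1) / (1 - q ^ (2 * m + 1)) := by
    intro m
    have hqq : ‖q ^ (2 * m + 1)‖ < 1 := lt_of_le_of_lt (norm_odd_le hq m) hq
    calc ∑' k, f m k = ∑' k, ((-1 : ℂ) ^ m * x ^ (m + 1)) * (q ^ (2 * m + 1)) ^ k :=
          tsum_congr fun k => by rw [hf]; simp only [← pow_mul]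
      _ = ((-1 : ℂ) ^ m * x ^ (m + 1)) * (1 - q ^ (2 * m + 1))⁻¹ := by
          rw [tsum_mul_left, tsum_geometric_of_norm_lt_one hqq]
      _ = _ := by rw [div_eq_mul_inv]
  have h2 : ∀ k : ℕ, ∑' m, f m k = x * q ^ k / (1 + x * q ^ (2 * k)) := by
    intro k
    have hxq : ‖-(x * q ^ (2 * k))‖ < 1 := by
      rw [norm_neg, norm_mul, norm_pow]
      calc ‖x‖ * ‖q‖ ^ (2 * k) ≤ ‖x‖ * 1 :=
            mul_le_mul_of_nonneg_left (npow_le_one hq _) (norm_nonneg x)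
        _ = ‖x‖ := mul_one _
        _ < 1 := hx
    calc ∑' m, f m k = ∑' m, (x * q ^ k) * (-(x * q ^ (2 * k))) ^ m :=
          tsum_congr fun m => by rw [hf]; ring
      _ = (x * q ^ k) * (1 - -(x * q ^ (2 * k)))⁻¹ := by
          rw [tsum_mul_left, tsum_geometric_of_norm_lt_one hxq]
      _ = _ := by rw [sub_neg_eq_add, div_eq_mul_inv]
  calc ∑' m : ℕ, (-1 : ℂ) ^ m * x ^ (m + 1) / (1 - q ^ (2 * m + 1))
      = ∑' m, ∑' k, f m k := tsum_congr fun m => (h1 m).symm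
    _ = ∑' k, ∑' m, f m k := (Summable.tsum_comm hsum).symm
    _ = _ := tsum_congr h2

lemma norm_odd_lt (hq : ‖q‖ < 1) (k : ℕ) : ‖q ^ (2 * k + 1)‖ < 1 :=
  lt_of_le_of_lt (norm_odd_le hq k) hq

lemma key1 (hq : ‖q‖ < 1) (n : ℕ) :
    ∑' m : ℕ, (-1 : ℂ) ^ m * (q ^ (2 * n + 1)) ^ (m + 1) / (1 - q ^ (2 * m + 1))
      = q ^ (n + 1) * T q n := by
  rw [key hq (norm_odd_lt hq n), T, ← tsum_mul_left]
  apply tsum_congr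
  intro k
  rw [A, ← pow_add, ← pow_add,
    show 2 * n + 1 + k = (n + 1) + (k + n) by ring,
    show 2 * n + 1 + 2 * k = 2 * (k + n) + 1 by ring, pow_add, mul_div_assoc]

lemma key2 (hq : ‖q‖ < 1) (n : ℕ) :
    ∑' m : ℕ, (-1 : ℂ) ^ m * (q ^ (2 * n + 3)) ^ (m + 1) / (1 - q ^ (2 * m + 1))
      = q ^ (n + 2) * T q (n + 1) := by
  have hx : ‖q ^ (2 * n + 3)‖ < 1 := by
    rw [show 2 * n + 3 = 2 * (n + 1) + 1 by ring]
    exact norm_odd_lt hq (n + 1)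
  rw [key hq hx, T, ← tsum_mul_left]
  apply tsum_congr
  intro k
  rw [A, ← pow_add, ← pow_add,
    show 2 * n + 3 + k = (n + 2) + (k + (n + 1)) by ring,
    show 2 * n + 3 + 2 * k = 2 * (k + (n + 1)) + 1 by ring, pow_add, mul_div_assoc]

lemma summable_m (hq : ‖q‖ < 1) {x : ℂ} (hx : ‖x‖ < 1) :
    Summable (fun m : ℕ => (-1 : ℂ) ^ m * x ^ (m + 1) / (1 - q ^ (2 * m + 1))) := by
  apply Summable.of_norm_bounded (g := fun m => ‖x‖ ^ m * (‖x‖ * (1 - ‖q‖)⁻¹))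
    ((summable_geometric_of_lt_one (norm_nonneg x) hx).mul_right _)
  intro m
  rw [div_eq_mul_inv, norm_mul, norm_mul, norm_pow, norm_pow, norm_neg, norm_one, one_pow, one_mul]
  calc ‖x‖ ^ (m + 1) * ‖(1 - q ^ (2 * m + 1))⁻¹‖
      ≤ ‖x‖ ^ (m + 1) * (1 - ‖q‖)⁻¹ :=
        mul_le_mul_of_nonneg_left (inv_denom_sub_le hq m) (by positivity)
    _ = ‖x‖ ^ m * (‖x‖ * (1 - ‖q‖)⁻¹) := by rw [pow_succ]; ring

/-- The term of the double series, rewritten. -/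
lemma term_eq (hq : ‖q‖ < 1) (hq0 : q ≠ 0) (m n : ℕ) :
    (-1 : ℂ) ^ m * q ^ (2 * (m + 1) * (n + 1))
        * (q ^ (((m : ℤ) + 1) - 1) + q ^ (-((m : ℤ) + 1)))
        / ((1 + q ^ (2 * (n + 1) - 1)) * (1 - q ^ (2 * (m + 1) - 1)))
    = (1 + q ^ (2 * n + 1))⁻¹ *
        (q⁻¹ * ((-1 : ℂ) ^ m * (q ^ (2 * n + 3)) ^ (m + 1) / (1 - q ^ (2 * m + 1)))
          + (-1 : ℂ) ^ m * (q ^ (2 * n + 1)) ^ (m + 1) / (1 - q ^ (2 * m + 1))) := by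
  have e1 : ((m : ℤ) + 1) - 1 = (m : ℤ) := by ring
  have e2 : -((m : ℤ) + 1) = -((m + 1 : ℕ) : ℤ) := by push_cast; ring
  rw [e1, e2, zpow_neg, zpow_natCast, zpow_natCast,
    show 2 * (n + 1) - 1 = 2 * n + 1 by omega, show 2 * (m + 1) - 1 = 2 * m + 1 by omega]
  have h2 := denom_add_ne hq n
  have h3 := denom_sub_ne hq m
  have h4 : q ^ (m + 1) ≠ 0 := pow_ne_zero _ hq0
  field_simp
  ring

lemma norm_term_le (hq : ‖q‖ < 1) (hq0 : q ≠ 0) (m n : ℕ) :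
    ‖(-1 : ℂ) ^ m * q ^ (2 * (m + 1) * (n + 1))
        * (q ^ (((m : ℤ) + 1) - 1) + q ^ (-((m : ℤ) + 1)))
        / ((1 + q ^ (2 * (n + 1) - 1)) * (1 - q ^ (2 * (m + 1) - 1)))‖
      ≤ (((1 - ‖q‖)⁻¹ * (2 * (1 - ‖q‖)⁻¹)) * ‖q‖ ^ m) * ‖q‖ ^ n := by
  have hr0 : (0 : ℝ) < ‖q‖ := norm_pos_iff.2 hq0
  have hC : (0 : ℝ) ≤ (1 - ‖q‖)⁻¹ := inv_nonneg.2 (by linarith)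
  rw [term_eq hq hq0 m n, norm_mul]
  have hu : ‖(-1 : ℂ) ^ m * (q ^ (2 * n + 3)) ^ (m + 1) / (1 - q ^ (2 * m + 1))‖
      ≤ ‖q‖ ^ ((2 * n + 3) * (m + 1)) * (1 - ‖q‖)⁻¹ := by
    rw [div_eq_mul_inv, norm_mul, norm_mul, norm_pow, norm_pow, norm_pow, norm_neg, norm_one,
      one_pow, one_mul, ← pow_mul]
    exact mul_le_mul_of_nonneg_left (inv_denom_sub_le hq m) (by positivity)
  have hv : ‖(-1 : ℂ) ^ m * (q ^ (2 * n + 1)) ^ (m + 1) / (1 - q ^ (2 * m + 1))‖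
      ≤ ‖q‖ ^ ((2 * n + 1) * (m + 1)) * (1 - ‖q‖)⁻¹ := by
    rw [div_eq_mul_inv, norm_mul, norm_mul, norm_pow, norm_pow, norm_pow, norm_neg, norm_one,
      one_pow, one_mul, ← pow_mul]
    exact mul_le_mul_of_nonneg_left (inv_denom_sub_le hq m) (by positivity)
  have hu2 : ‖q‖ ^ ((2 * n + 3) * (m + 1)) ≤ ‖q‖ ^ (m + n + 1) := npow_le hq (by nlinarith)
  have hv2 : ‖q‖ ^ ((2 * n + 1) * (m + 1)) ≤ ‖q‖ ^ (m + n) := npow_le hq (by nlinarith)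
  have hn1 : ‖q⁻¹ * ((-1 : ℂ) ^ m * (q ^ (2 * n + 3)) ^ (m + 1) / (1 - q ^ (2 * m + 1)))‖
      ≤ (1 - ‖q‖)⁻¹ * ‖q‖ ^ (m + n) := by
    rw [norm_mul, norm_inv]
    calc (‖q‖)⁻¹ * ‖(-1 : ℂ) ^ m * (q ^ (2 * n + 3)) ^ (m + 1) / (1 - q ^ (2 * m + 1))‖
        ≤ (‖q‖)⁻¹ * (‖q‖ ^ (m + n + 1) * (1 - ‖q‖)⁻¹) := by
          refine mul_le_mul_of_nonneg_left ?_ (inv_nonneg.2 hr0.le)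
          exact le_trans hu (mul_le_mul_of_nonneg_right hu2 hC)
      _ = ((‖q‖)⁻¹ * ‖q‖) * ((1 - ‖q‖)⁻¹ * ‖q‖ ^ (m + n)) := by rw [pow_succ]; ring
      _ = (1 - ‖q‖)⁻¹ * ‖q‖ ^ (m + n) := by rw [inv_mul_cancel₀ (ne_of_gt hr0), one_mul]
  have hn2 : ‖(-1 : ℂ) ^ m * (q ^ (2 * n + 1)) ^ (m + 1) / (1 - q ^ (2 * m + 1))‖
      ≤ (1 - ‖q‖)⁻¹ * ‖q‖ ^ (m + n) := by
    calc ‖(-1 : ℂ) ^ m * (q ^ (2 * n + 1)) ^ (m + 1) / (1 - q ^ (2 * m + 1))‖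
        ≤ ‖q‖ ^ (m + n) * (1 - ‖q‖)⁻¹ :=
          le_trans hv (mul_le_mul_of_nonneg_right hv2 hC)
      _ = (1 - ‖q‖)⁻¹ * ‖q‖ ^ (m + n) := by ring
  have hinner : ‖q⁻¹ * ((-1 : ℂ) ^ m * (q ^ (2 * n + 3)) ^ (m + 1) / (1 - q ^ (2 * m + 1)))
        + (-1 : ℂ) ^ m * (q ^ (2 * n + 1)) ^ (m + 1) / (1 - q ^ (2 * m + 1))‖
      ≤ 2 * (1 - ‖q‖)⁻¹ * ‖q‖ ^ (m + n) := by
    calc ‖_ + _‖ ≤ _ + _ := norm_add_le _ _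
      _ ≤ (1 - ‖q‖)⁻¹ * ‖q‖ ^ (m + n) + (1 - ‖q‖)⁻¹ * ‖q‖ ^ (m + n) := add_le_add hn1 hn2
      _ = 2 * (1 - ‖q‖)⁻¹ * ‖q‖ ^ (m + n) := by ring
  calc ‖(1 + q ^ (2 * n + 1))⁻¹‖ * ‖_‖
      ≤ (1 - ‖q‖)⁻¹ * (2 * (1 - ‖q‖)⁻¹ * ‖q‖ ^ (m + n)) :=
        mul_le_mul (inv_denom_add_le hq n) hinner (norm_nonneg _) hC
    _ = (((1 - ‖q‖)⁻¹ * (2 * (1 - ‖q‖)⁻¹)) * ‖q‖ ^ m) * ‖q‖ ^ n := by rw [pow_add]; ring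

lemma inner_sum (hq : ‖q‖ < 1) (hq0 : q ≠ 0) (n : ℕ) :
    ∑' m : ℕ, ((-1 : ℂ) ^ m * q ^ (2 * (m + 1) * (n + 1))
        * (q ^ (((m : ℤ) + 1) - 1) + q ^ (-((m : ℤ) + 1)))
        / ((1 + q ^ (2 * (n + 1) - 1)) * (1 - q ^ (2 * (m + 1) - 1))))
    = q * A q n * (T q n + T q (n + 1)) := by
  have hx1 : ‖q ^ (2 * n + 1)‖ < 1 := norm_odd_lt hq n
  have hx2 : ‖q ^ (2 * n + 3)‖ < 1 := by
    rw [show 2 * n + 3 = 2 * (n + 1) + 1 by ring]; exact norm_odd_lt hq (n + 1)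
  have hs1 := summable_m hq hx1
  have hs2 := summable_m hq hx2
  calc ∑' m : ℕ, ((-1 : ℂ) ^ m * q ^ (2 * (m + 1) * (n + 1))
        * (q ^ (((m : ℤ) + 1) - 1) + q ^ (-((m : ℤ) + 1)))
        / ((1 + q ^ (2 * (n + 1) - 1)) * (1 - q ^ (2 * (m + 1) - 1))))
      = ∑' m : ℕ, (1 + q ^ (2 * n + 1))⁻¹ *
          (q⁻¹ * ((-1 : ℂ) ^ m * (q ^ (2 * n + 3)) ^ (m + 1) / (1 - q ^ (2 * m + 1)))
            + (-1 : ℂ) ^ m * (q ^ (2 * n + 1)) ^ (m + 1) / (1 - q ^ (2 * m + 1))) :=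
        tsum_congr fun m => term_eq hq hq0 m n
    _ = (1 + q ^ (2 * n + 1))⁻¹ *
          (q⁻¹ * (q ^ (n + 2) * T q (n + 1)) + q ^ (n + 1) * T q n) := by
        rw [tsum_mul_left, Summable.tsum_add (hs2.mul_left _) hs1, tsum_mul_left, key1 hq, key2 hq]
    _ = q * A q n * (T q n + T q (n + 1)) := by
        rw [A]
        have h2 := denom_add_ne hq n
        field_simp
        ring

end Theta2Aux

open Theta2Aux Filter Topology

set_option maxHeartbeats 1000000 in
/-- `Σ_{m,n≥1} (−1)^{m−1} q^{2mn} (q^{m−1} + q^{−m}) / ((1+q^{2n−1})(1−q^{2m−1}))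
      = q ( Σ_{n≥1} q^{n−1}/(1+q^{2n−1}) )^2`,
where `q^{m−1}` and `q^{−m}` are integer powers (`zpow`), legitimate since `q ≠ 0`. -/
theorem theta2_square_identity (q : ℂ) (hq : ‖q‖ < 1) (hq0 : q ≠ 0) :
    ∑' m : ℕ, ∑' n : ℕ,
        (-1 : ℂ) ^ m * q ^ (2 * (m + 1) * (n + 1))
          * (q ^ (((m : ℤ) + 1) - 1) + q ^ (-((m : ℤ) + 1)))
          / ((1 + q ^ (2 * (n + 1) - 1)) * (1 - q ^ (2 * (m + 1) - 1)))
    = q * (∑' n : ℕ, q ^ ((n + 1) - 1) / (1 + q ^ (2 * (n + 1) - 1))) ^ 2 := by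
  have hC : (0 : ℝ) ≤ (1 - ‖q‖)⁻¹ := inv_nonneg.2 (by linarith)
  have hsum : Summable (Function.uncurry fun (m n : ℕ) =>
      (-1 : ℂ) ^ m * q ^ (2 * (m + 1) * (n + 1))
        * (q ^ (((m : ℤ) + 1) - 1) + q ^ (-((m : ℤ) + 1)))
        / ((1 + q ^ (2 * (n + 1) - 1)) * (1 - q ^ (2 * (m + 1) - 1)))) := by
    apply Summable.of_norm_bounded
      (g := fun p : ℕ × ℕ => ((((1 - ‖q‖)⁻¹ * (2 * (1 - ‖q‖)⁻¹)) * ‖q‖ ^ p.1)) * ‖q‖ ^ p.2)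
      (Summable.mul_of_nonneg
        (((summable_geometric_of_lt_one (norm_nonneg q) hq).mul_left _))
        (summable_geometric_of_lt_one (norm_nonneg q) hq)
        (fun i => mul_nonneg (mul_nonneg hC (mul_nonneg (by norm_num) hC))
          (pow_nonneg (norm_nonneg q) i))
        (fun i => pow_nonneg (norm_nonneg q) i))
    rintro ⟨m, n⟩
    exact norm_term_le hq hq0 m n
  -- swap the order of summation
  rw [← Summable.tsum_comm hsum]
  -- evaluate the inner sums
  have hinner : ∀ n : ℕ, (∑' m : ℕ,
      (-1 : ℂ) ^ m * q ^ (2 * (m + 1) * (n + 1))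
        * (q ^ (((m : ℤ) + 1) - 1) + q ^ (-((m : ℤ) + 1)))
        / ((1 + q ^ (2 * (n + 1) - 1)) * (1 - q ^ (2 * (m + 1) - 1))))
      = q * (T q n ^ 2 - T q (n + 1) ^ 2) := by
    intro n
    rw [inner_sum hq hq0 n]
    have hA : A q n = T q n - T q (n + 1) := by rw [T_rec hq n]; ring
    rw [hA]; ring
  rw [tsum_congr hinner]
  -- telescoping
  have hs2 : Summable (fun n => T q n ^ 2) := by
    apply Summable.of_norm_bounded
      (g := fun n => (‖q‖ ^ 2) ^ n * (((1 - ‖q‖)⁻¹ * (1 - ‖q‖)⁻¹) * ((1 - ‖q‖)⁻¹ * (1 - ‖q‖)⁻¹)))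
      (Summable.mul_right _ (summable_geometric_of_lt_one (by positivity)
        (by nlinarith [norm_nonneg q])))
    intro n
    rw [norm_pow]
    calc ‖T q n‖ ^ 2 ≤ (‖q‖ ^ n * ((1 - ‖q‖)⁻¹ * (1 - ‖q‖)⁻¹)) ^ 2 := by
          apply pow_le_pow_left₀ (norm_nonneg _) (normT_le hq n)
      _ = (‖q‖ ^ 2) ^ n * (((1 - ‖q‖)⁻¹ * (1 - ‖q‖)⁻¹) * ((1 - ‖q‖)⁻¹ * (1 - ‖q‖)⁻¹)) := by
          rw [mul_pow, ← pow_mul, ← pow_mul, Nat.mul_comm n 2]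
          ring
  have hs3 : Summable (fun n => T q (n + 1) ^ 2) := (summable_nat_add_iff 1).2 hs2
  have htel : HasSum (fun n => T q n ^ 2 - T q (n + 1) ^ 2) (T q 0 ^ 2) := by
    rw [(hs2.sub hs3).hasSum_iff_tendsto_nat]
    have heq : ∀ N, ∑ i ∈ Finset.range N, (T q i ^ 2 - T q (i + 1) ^ 2)
        = T q 0 ^ 2 - T q N ^ 2 := fun N => Finset.sum_range_sub' (fun i => T q i ^ 2) N
    have h0 : Tendsto (fun N => T q N ^ 2) atTop (𝓝 0) := by
      simpa using (T_tendsto hq).pow 2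
    have hlim := (tendsto_const_nhds (x := T q 0 ^ 2) (f := atTop (α := ℕ))).sub h0
    rw [sub_zero] at hlim
    exact Tendsto.congr (fun N => (heq N).symm) hlim
  rw [tsum_mul_left, htel.tsum_eq]
  -- identify T q 0 with the sum on the right-hand side
  have hT0 : (∑' n : ℕ, q ^ ((n + 1) - 1) / (1 + q ^ (2 * (n + 1) - 1))) = T q 0 := by
    rw [T]
    apply tsum_congr
    intro n
    rw [A, show n + 0 = n by omega, show (n + 1) - 1 = n by omega,
      show 2 * (n + 1) - 1 = 2 * n + 1 by omega]
  rw [hT0]
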